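/- Let w : (-1/2,∞) → (0,∞) be continuous. Let I, Ψ₀ : D → ℝ (D ⊆ ℝ⁴) with I > 0 and Ψ₀/I > -1/2 pointwise, and suppose there exist constants α, C, m > 0 such that: (a) whenever Ψ₀ ≥ m and Ψ₀/I ≥ 1, y²|w'(y)| ≤ C at y = Ψ₀/I and w(y) ≤ α|w'(y)|^{1/2}; (b) whenever I > δ (for fixed δ > 0), w(Ψ₀/I) ≤ C. Assume additionally Ψ₀ ≥ m on {I ≤ δ} and Ψ₀/I ≥ 1 on {I ≤ δ}. Then I^{-1}·w(Ψ₀/I) ≤ max(C/δ, α·C^{1/2}/m) pointwise on D; i.e., the a priori singular product I^{-1}w(I^{-1}Ψ₀) is uniformly bounded. -/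

import Mathlib

/-- The key regularization estimate: the a priori singular product
`I⁻¹·w(I⁻¹Ψ₀)` is uniformly bounded. Writing `y = Ψ₀/I`, the structural
assumptions `y²|w'(y)| ≤ C` and `w ≤ α|w'|^{1/2}` give `y·w(y) ≤ α√C`, and
the lower bound `Ψ₀ ≥ m` on `{I ≤ δ}` (with `w(Ψ₀/I) ≤ C` on `{I > δ}`)
yields `I⁻¹w(Ψ₀/I) ≤ max(C/δ, α√C/m)`. -/
theorem stmt19 {P : Type*} (w : ℝ → ℝ)
    (hwc : ContinuousOn w (Set.Ioi (-1/2 : ℝ)))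
    (hwpos : ∀ y : ℝ, -1/2 < y → 0 < w y)
    (I Ψ₀ : P → ℝ) (α C m δ : ℝ)
    (hα : 0 < α) (hC : 0 < C) (hm : 0 < m) (hδ : 0 < δ)
    (hIpos : ∀ p, 0 < I p) (hratio : ∀ p, -1/2 < Ψ₀ p / I p)
    (ha : ∀ p, m ≤ Ψ₀ p → 1 ≤ Ψ₀ p / I p →
      (Ψ₀ p / I p) ^ 2 * |deriv w (Ψ₀ p / I p)| ≤ C ∧
      w (Ψ₀ p / I p) ≤ α * Real.sqrt |deriv w (Ψ₀ p / I p)|)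
    (hb : ∀ p, δ < I p → w (Ψ₀ p / I p) ≤ C)
    (hsmall : ∀ p, I p ≤ δ → m ≤ Ψ₀ p ∧ 1 ≤ Ψ₀ p / I p) :
    ∀ p, (I p)⁻¹ * w (Ψ₀ p / I p) ≤ max (C / δ) (α * Real.sqrt C / m) := by
  intro p
  set y := Ψ₀ p / I p with hy
  have hwy : 0 < w y := hwpos y (hratio p)
  by_cases h : δ < I p
  · -- easy region: I > δ
    have h1 : (I p)⁻¹ ≤ δ⁻¹ := by
      apply inv_anti₀ hδ h.le
    calc (I p)⁻¹ * w y ≤ δ⁻¹ * C := by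
          exact mul_le_mul h1 (hb p h) hwy.le (by positivity)
      _ = C / δ := by ring
      _ ≤ max (C / δ) (α * Real.sqrt C / m) := le_max_left _ _
  · push_neg at h
    obtain ⟨hΨm, hy1⟩ := hsmall p h
    obtain ⟨hC1, hC2⟩ := ha p hΨm hy1
    have hIp := hIpos p
    have hΨpos : 0 < Ψ₀ p := lt_of_lt_of_le hm hΨm
    have hypos : 0 < y := lt_of_lt_of_le one_pos hy1
    -- y * w y ≤ α * √C
    have key : y * w y ≤ α * Real.sqrt C := by
      calc y * w y ≤ y * (α * Real.sqrt |deriv w y|) :=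
            mul_le_mul_of_nonneg_left hC2 hypos.le
        _ = α * (y * Real.sqrt |deriv w y|) := by ring
        _ = α * Real.sqrt (y ^ 2 * |deriv w y|) := by
            rw [Real.sqrt_mul (by positivity), Real.sqrt_sq hypos.le]
        _ ≤ α * Real.sqrt C :=
            mul_le_mul_of_nonneg_left (Real.sqrt_le_sqrt hC1) hα.le
    have heq : (I p)⁻¹ * w y = y * w y / Ψ₀ p := by
      field_simp [hy]
      rw [hy]; field_simp
    rw [heq]
    have : y * w y / Ψ₀ p ≤ α * Real.sqrt C / m := by
      apply div_le_div₀ (by positivity) key hm hΨm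
    exact this.trans (le_max_right _ _)
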